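/- Let W ∈ ℝ^{m×n}, x₁, x₂ ∈ ℝ^n, and let ℓ(t) = (1−ت)x₁ + t·x₂ for t ∈ [0,1]. Let 0 = t_1 ≤ t_2 ≤ ⋯ ≤ t_{n_t} = 1 and write x_{t_k} = ℓ(t_k). Then Σ_{k=1}^{n_t−1} ‖ReLU(W x_{t_k}) − ReLU(W x_{t_{k+1}})‖₂² ≤ ‖ReLU(W x₁) − ReLU(W x₂)‖₂², and Σ_{k=1}^{n_t−1} ‖ReLU(W x_{t_k}) − ReLU(W x_{t_{k+1}})‖₂ ≤ √(n_t) · ‖ReLU(W x₁) − ReLU(W x₂)‖₂. -/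

import Mathlib

/-- Componentwise ReLU applied to a vector. -/
noncomputable def relu {m : ℕ} (y : Fin m → ℝ) : Fin m → ℝ := fun j => max (y j) 0

/-- The line segment `ℓ(t) = (1−t)x₁ + t x₂`. -/
def seg {n : ℕ} (x₁ x₂ : Fin n → ℝ) (t : ℝ) : Fin n → ℝ :=
  fun i => (1 - t) * x₁ i + t * x₂ i

open Fin.NatCast in
/-- Telescoping + positivity: for a monotone-or-antitone `u : Fin (nt+1) → ℝ`,
the sum of squared consecutive differences is at most the squared total difference. -/
lemma key_step {nt : ℕ} (u : Fin (nt + 1) → ℝ) (h : Monotone u ∨ Antitone u) :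
    ∑ k : Fin nt, (u k.castSucc - u k.succ) ^ 2 ≤ (u 0 - u (Fin.last nt)) ^ 2 := by
  -- reduce to monotone case by replacing u with -u if needed
  have main : ∀ v : Fin (nt + 1) → ℝ, Monotone v →
      ∑ k : Fin nt, (v k.castSucc - v k.succ) ^ 2 ≤ (v 0 - v (Fin.last nt)) ^ 2 := by
    intro v hv
    have hnn : ∀ k : Fin nt, 0 ≤ v k.succ - v k.castSucc := by
      intro k
      have : v k.castSucc ≤ v k.succ := hv (Fin.castSucc_le_succ k)
      linarith
    have h1 : ∑ k : Fin nt, (v k.castSucc - v k.succ) ^ 2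
        = ∑ k : Fin nt, (v k.succ - v k.castSucc) ^ 2 := by
      apply Finset.sum_congr rfl
      intro k _
      ring
    have h2 : ∑ k : Fin nt, (v k.succ - v k.castSucc) ^ 2
        ≤ (∑ k : Fin nt, (v k.succ - v k.castSucc)) ^ 2 :=
      Finset.sum_sq_le_sq_sum_of_nonneg (fun i _ => hnn i)
    have h3 : ∑ k : Fin nt, (v k.succ - v k.castSucc)
        = v (Fin.last nt) - v 0 := by
      have e : ∀ k : Fin nt, v k.succ - v k.castSucc
          = (fun i : ℕ => v i) ((k : ℕ) + 1) - (fun i : ℕ => v i) (k : ℕ) := by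
        intro k
        have e1 : (((k : ℕ) : Fin (nt + 1))) = k.castSucc := by
          ext
          simp [Fin.val_cast_of_lt (Nat.lt_succ_of_lt k.isLt)]
        have e2 : ((((k : ℕ) + 1 : ℕ) : Fin (nt + 1))) = k.succ := by
          ext
          simp [Fin.val_cast_of_lt (Nat.succ_lt_succ k.isLt)]
        simp only [Nat.cast_add, Nat.cast_one] at e2 ⊢
        rw [e2, e1]
      rw [Finset.sum_congr rfl (fun k _ => e k),
        Fin.sum_univ_eq_sum_range (fun i => (fun i : ℕ => v i) (i + 1) - (fun i : ℕ => v i) i) nt,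
        Finset.sum_range_sub (fun i : ℕ => v i) nt]
      simp [Fin.natCast_eq_last]
    calc ∑ k : Fin nt, (v k.castSucc - v k.succ) ^ 2
        ≤ (v (Fin.last nt) - v 0) ^ 2 := by rw [h1]; rw [h3] at h2; exact h2
      _ = (v 0 - v (Fin.last nt)) ^ 2 := by ring
  rcases h with h | h
  · exact main u h
  · have := main (fun k => -u k) (fun a b hab => by simpa using h hab)
    calc ∑ k : Fin nt, (u k.castSucc - u k.succ) ^ 2
        = ∑ k : Fin nt, (-u k.castSucc - -u k.succ) ^ 2 := by
          apply Finset.sum_congr rfl; intro k _; ring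
      _ ≤ (-u 0 - -u (Fin.last nt)) ^ 2 := this
      _ = (u 0 - u (Fin.last nt)) ^ 2 := by ring

lemma mulVec_seg {m n : ℕ} (W : Matrix (Fin m) (Fin n) ℝ) (x₁ x₂ : Fin n → ℝ) (s : ℝ)
    (j : Fin m) :
    W.mulVec (seg x₁ x₂ s) j = W.mulVec x₁ j + s * (W.mulVec x₂ j - W.mulVec x₁ j) := by
  simp only [Matrix.mulVec, dotProduct, seg]
  rw [← Finset.sum_sub_distrib]
  rw [Finset.mul_sum, ← Finset.sum_add_distrib]
  apply Finset.sum_congr rfl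
  intro i _
  ring

/-- **Co-linear additivity of `ReLU(W·)`**: for points `x_{t_k}` along the segment from
`x₁` to `x₂` with `0 = t_1 ≤ ⋯ ≤ t_{n_t} = 1` (here `n_t = nt + 1` points), the sums of
squared (resp. plain) Euclidean distances of consecutive ReLU images are bounded by the
squared distance (resp. `√(n_t)` times the distance) of the endpoint images. -/
theorem relu_colinear_additivity {m n nt : ℕ} (W : Matrix (Fin m) (Fin n) ℝ)
    (x₁ x₂ : Fin n → ℝ) (t : Fin (nt + 1) → ℝ) (hmono : Monotone t)
    (h0 : t 0 = 0) (h1 : t (Fin.last nt) = 1) :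
    (∑ k : Fin nt, ∑ j,
        (relu (W.mulVec (seg x₁ x₂ (t k.castSucc))) j
          - relu (W.mulVec (seg x₁ x₂ (t k.succ))) j) ^ 2)
      ≤ ∑ j, (relu (W.mulVec x₁) j - relu (W.mulVec x₂) j) ^ 2 ∧
    (∑ k : Fin nt, Real.sqrt (∑ j,
        (relu (W.mulVec (seg x₁ x₂ (t k.castSucc))) j
          - relu (W.mulVec (seg x₁ x₂ (t k.succ))) j) ^ 2))
      ≤ Real.sqrt (nt + 1) *
          Real.sqrt (∑ j, (relu (W.mulVec x₁) j - relu (W.mulVec x₂) j) ^ 2) := by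
  -- per-coordinate sequence
  set u : Fin m → Fin (nt + 1) → ℝ :=
    fun j k => relu (W.mulVec (seg x₁ x₂ (t k))) j with hu
  have hseg0 : seg x₁ x₂ 0 = x₁ := by funext i; simp [seg]
  have hseg1 : seg x₁ x₂ 1 = x₂ := by funext i; simp [seg]
  have hu0 : ∀ j, u j 0 = relu (W.mulVec x₁) j := by
    intro j; simp [hu, h0, hseg0]
  have huL : ∀ j, u j (Fin.last nt) = relu (W.mulVec x₂) j := by
    intro j; simp [hu, h1, hseg1]
  have hmonoanti : ∀ j, Monotone (u j) ∨ Antitone (u j) := by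
    intro j
    rcases le_or_gt (W.mulVec x₁ j) (W.mulVec x₂ j) with hc | hc
    · left
      intro a b hab
      simp only [hu, relu, mulVec_seg]
      apply max_le_max _ le_rfl
      have := hmono hab
      nlinarith
    · right
      intro a b hab
      simp only [hu, relu, mulVec_seg]
      apply max_le_max _ le_rfl
      have := hmono hab
      nlinarith
  have hkey : ∀ j, ∑ k : Fin nt, (u j k.castSucc - u j k.succ) ^ 2
      ≤ (relu (W.mulVec x₁) j - relu (W.mulVec x₂) j) ^ 2 := by
    intro j
    rw [← hu0 j, ← huL j]
    exact key_step (u j) (hmonoanti j)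
  have part1 : (∑ k : Fin nt, ∑ j,
        (relu (W.mulVec (seg x₁ x₂ (t k.castSucc))) j
          - relu (W.mulVec (seg x₁ x₂ (t k.succ))) j) ^ 2)
      ≤ ∑ j, (relu (W.mulVec x₁) j - relu (W.mulVec x₂) j) ^ 2 := by
    rw [Finset.sum_comm]
    exact Finset.sum_le_sum fun j _ => hkey j
  refine ⟨part1, ?_⟩
  set S : Fin nt → ℝ := fun k => ∑ j,
      (relu (W.mulVec (seg x₁ x₂ (t k.castSucc))) j
        - relu (W.mulVec (seg x₁ x₂ (t k.succ))) j) ^ 2 with hS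
  have hSnn : ∀ k, 0 ≤ S k := fun k => Finset.sum_nonneg fun j _ => sq_nonneg _
  have hTnn : 0 ≤ ∑ j, (relu (W.mulVec x₁) j - relu (W.mulVec x₂) j) ^ 2 :=
    Finset.sum_nonneg fun j _ => sq_nonneg _
  -- Cauchy–Schwarz
  have hcs : (∑ k : Fin nt, Real.sqrt (S k)) ^ 2 ≤ (nt : ℝ) * ∑ k : Fin nt, S k := by
    have := sq_sum_le_card_mul_sum_sq (s := (Finset.univ : Finset (Fin nt)))
      (f := fun k => Real.sqrt (S k))
    simpa [Real.sq_sqrt (hSnn _)] using this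
  have hsum_nn : 0 ≤ ∑ k : Fin nt, Real.sqrt (S k) :=
    Finset.sum_nonneg fun k _ => Real.sqrt_nonneg _
  have h4 : ∑ k : Fin nt, Real.sqrt (S k)
      ≤ Real.sqrt ((nt : ℝ) * ∑ k : Fin nt, S k) := by
    rw [← Real.sqrt_sq hsum_nn]
    exact Real.sqrt_le_sqrt hcs
  calc ∑ k : Fin nt, Real.sqrt (S k)
      ≤ Real.sqrt ((nt : ℝ) * ∑ k : Fin nt, S k) := h4
    _ = Real.sqrt (nt : ℝ) * Real.sqrt (∑ k : Fin nt, S k) := Real.sqrt_mul (by positivity) _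
    _ ≤ Real.sqrt ((nt : ℝ) + 1) *
          Real.sqrt (∑ j, (relu (W.mulVec x₁) j - relu (W.mulVec x₂) j) ^ 2) := by
        apply mul_le_mul
        · exact Real.sqrt_le_sqrt (by linarith)
        · exact Real.sqrt_le_sqrt part1
        · exact Real.sqrt_nonneg _
        · exact Real.sqrt_nonneg _
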